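/- For every integer h ≥ 0, the ordinary generating function of the probabilities q_n^{(h)} satisfies the identity (Σ_{n≥0} q_n^{(h)} z^n) · rev(U_{h+1})(z) = 2 z^h in the ring of formal power series ℚ⟦z⟧, where rev(U_{h+1})(z) = z^{h+1} U_{h+1}(1/z) denotes the reversed Chebyshev polynomial of the second kind of degree h+1 (the polynomial whose coefficient sequence is that of U_{h+1} reversed). Equivalently, the probability that a simple symmetric random walk of length n on ℤ stays in [0,h] and ends at h equals 2 [z^{n+1}] 1/U_{h+1}(1/z) for all h ≥ 0 and n ≥ 0. -/

import Mathlib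

/-- Partial sum `S_k` of the `±1`-walk encoded by `ε : Fin n → Bool`
(`true` = step `+1`, `false` = step `-1`). -/
def walkSum (n : ℕ) (ε : Fin n → Bool) (k : ℕ) : ℤ :=
  ∑ i : Fin n, if (i : ℕ) < k then (if ε i then 1 else -1) else 0

/-- `W n h`: number of `±1`-paths of length `n` with `0 ≤ S_k ≤ h` for all `k` and `S_n = h`. -/
noncomputable def W (n h : ℕ) : ℕ :=
  Nat.card {ε : Fin n → Bool //
    (∀ k ≤ n, 0 ≤ walkSum n ε k ∧ walkSum n ε k ≤ (h : ℤ)) ∧ walkSum n ε n = (h : ℤ)}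

namespace OgfAux

lemma walkSum_of_le {n : ℕ} (ε : Fin n → Bool) {k : ℕ} (hk : n ≤ k) :
    walkSum n ε k = walkSum n ε n := by
  unfold walkSum
  refine Finset.sum_congr rfl fun i _ => ?_
  have h1 : (i : ℕ) < k := lt_of_lt_of_le i.isLt hk
  simp [h1, i.isLt]

lemma walkSum_castSucc {n : ℕ} (ε : Fin (n+1) → Bool) {k : ℕ} (hk : k ≤ n) :
    walkSum (n+1) ε k = walkSum n (fun i => ε i.castSucc) k := by
  unfold walkSum
  rw [Fin.sum_univ_castSucc]
  have h2 : ¬ ((Fin.last n : ℕ) < k) := by simp [Fin.last]; omega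
  rw [if_neg h2, add_zero]
  refine Finset.sum_congr rfl fun i _ => ?_
  simp

lemma walkSum_last {n : ℕ} (ε : Fin (n+1) → Bool) :
    walkSum (n+1) ε (n+1)
      = walkSum n (fun i => ε i.castSucc) n + (if ε (Fin.last n) then 1 else -1) := by
  unfold walkSum
  rw [Fin.sum_univ_castSucc]
  congr 1
  · refine Finset.sum_congr rfl fun i _ => ?_
    have h1 : ((i.castSucc : Fin (n+1)) : ℕ) < n + 1 := by
      have := i.isLt; simp
    rw [if_pos h1, if_pos i.isLt]
  · simp [Fin.last]

def ok (h n : ℕ) (m : ℤ) (ε : Fin n → Bool) : Prop :=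
  (∀ k ≤ n, 0 ≤ walkSum n ε k ∧ walkSum n ε k ≤ (h : ℤ)) ∧ walkSum n ε n = m

noncomputable def Wm (h n : ℕ) (m : ℤ) : ℕ := Nat.card {ε : Fin n → Bool // ok h n m ε}

lemma W_eq_Wm (n h : ℕ) : W n h = Wm h n (h : ℤ) := rfl

lemma Wm_eq_zero {h n : ℕ} {m : ℤ} (hm : m < 0 ∨ (h : ℤ) < m) : Wm h n m = 0 := by
  have : IsEmpty {ε : Fin n → Bool // ok h n m ε} := by
    constructor
    rintro ⟨ε, ⟨hc, he⟩⟩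
    have := hc n le_rfl
    rw [he] at this
    rcases hm with hm | hm <;> omega
  exact Nat.card_of_isEmpty

lemma walkSum_zero_fun (ε : Fin 0 → Bool) (k : ℕ) : walkSum 0 ε k = 0 := by
  simp [walkSum]

lemma Wm_zero (h : ℕ) (m : ℤ) : Wm h 0 m = if m = 0 then 1 else 0 := by
  split
  · rename_i hm
    subst hm
    have hall : ∀ ε : Fin 0 → Bool, ok h 0 0 ε := by
      intro ε
      constructor
      · intro k _
        rw [walkSum_zero_fun]
        exact ⟨le_rfl, Int.natCast_nonneg h⟩
      · exact walkSum_zero_fun ε 0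
    rw [Wm, Nat.card_congr (Equiv.subtypeUnivEquiv hall)]
    simp [Nat.card_eq_fintype_card]
  · rename_i hm
    have : IsEmpty {ε : Fin 0 → Bool // ok h 0 m ε} := by
      constructor
      rintro ⟨ε, ⟨_, he⟩⟩
      rw [walkSum_zero_fun] at he
      exact hm he.symm
    exact Nat.card_of_isEmpty

lemma ok_succ_iff (h n : ℕ) (m : ℤ) (hm0 : 0 ≤ m) (hmh : m ≤ (h : ℤ))
    (ε : Fin (n+1) → Bool) :
    ok h (n+1) m ε ↔
      ok h n (if ε (Fin.last n) then m - 1 else m + 1) (fun i => ε i.castSucc) := by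
  constructor
  · rintro ⟨hc, he⟩
    refine ⟨fun k hk => ?_, ?_⟩
    · rw [← walkSum_castSucc ε hk]
      exact hc k (le_trans hk (Nat.le_succ n))
    · have h1 := walkSum_last ε
      rw [he] at h1
      cases hb : ε (Fin.last n) <;> simp [hb] at h1 ⊢ <;> omega
  · rintro ⟨hc, he⟩
    have hlast : walkSum (n+1) ε (n+1) = m := by
      rw [walkSum_last, he]
      cases hb : ε (Fin.last n) <;> simp [hb]
    refine ⟨fun k hk => ?_, ?_⟩
    · by_cases hk' : k ≤ n
      · rw [walkSum_castSucc ε hk']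
        exact hc k hk'
      · have hke : k = n + 1 := by omega
        subst hke
        rw [hlast]
        exact ⟨hm0, hmh⟩
    · exact hlast
def splitEquiv {A : Type*} (Q : A × Bool → Prop) :
    {p : A × Bool // Q p} ≃ {a : A // Q (a, true)} ⊕ {a : A // Q (a, false)} where
  toFun := fun ⟨⟨a, b⟩, hq⟩ => match b, hq with
    | true, hq => Sum.inl ⟨a, hq⟩
    | false, hq => Sum.inr ⟨a, hq⟩
  invFun := fun s => match s with
    | Sum.inl ⟨a, hq⟩ => ⟨(a, true), hq⟩
    | Sum.inr ⟨a, hq⟩ => ⟨(a, false), hq⟩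
  left_inv := by rintro ⟨⟨a, b⟩, hq⟩; cases b <;> rfl
  right_inv := by rintro (⟨a, hq⟩ | ⟨a, hq⟩) <;> rfl

lemma Wm_succ (h n : ℕ) (m : ℤ) (hm0 : 0 ≤ m) (hmh : m ≤ (h : ℤ)) :
    Wm h (n+1) m = Wm h n (m - 1) + Wm h n (m + 1) := by
  classical
  have e1 : {ε : Fin (n+1) → Bool // ok h (n+1) m ε} ≃
      {p : (Fin n → Bool) × Bool //
        ok h n (if p.2 then m - 1 else m + 1) p.1} :=
    { toFun := fun ε => ⟨(fun i => ε.1 i.castSucc, ε.1 (Fin.last n)),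
        (ok_succ_iff h n m hm0 hmh ε.1).mp ε.2⟩
      invFun := fun p => ⟨Fin.snoc p.1.1 p.1.2, by
        apply (ok_succ_iff h n m hm0 hmh _).mpr
        have h1 : Fin.snoc (α := fun _ => Bool) p.1.1 p.1.2 (Fin.last n) = p.1.2 :=
          Fin.snoc_last _ _
        have h2 : (fun i : Fin n => Fin.snoc (α := fun _ => Bool) p.1.1 p.1.2 i.castSucc)
            = p.1.1 := by
          funext i; exact Fin.snoc_castSucc _ _ _
        rw [h1, h2]
        exact p.2⟩
      left_inv := by
        rintro ⟨ε, hε⟩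
        apply Subtype.ext
        funext i
        refine Fin.lastCases ?_ (fun j => ?_) i
        · simp [Fin.snoc_last]
        · simp [Fin.snoc_castSucc]
      right_inv := by
        rintro ⟨⟨a, b⟩, hq⟩
        apply Subtype.ext
        simp [Fin.snoc_last, Fin.snoc_castSucc] }
  rw [Wm, Nat.card_congr e1, Nat.card_congr (splitEquiv _), Nat.card_sum]
  simp only [if_pos, if_neg]
  rfl
open PowerSeries in
noncomputable def F (h : ℕ) (m : ℤ) : PowerSeries ℚ :=
  PowerSeries.mk fun n => (Wm h n m : ℚ) / 2 ^ n

lemma F_eq_zero {h : ℕ} {m : ℤ} (hm : m < 0 ∨ (h : ℤ) < m) : F h m = 0 := by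
  ext n
  simp [F, Wm_eq_zero hm]

lemma F_rec (h : ℕ) (m : ℤ) (hm0 : 0 ≤ m) (hmh : m ≤ (h : ℤ)) :
    PowerSeries.C (R := ℚ) 2 * F h m = (if m = 0 then PowerSeries.C (R := ℚ) 2 else 0)
      + PowerSeries.X * (F h (m - 1) + F h (m + 1)) := by
  ext N
  cases N with
  | zero =>
    simp only [map_add, PowerSeries.coeff_zero_X_mul, add_zero, PowerSeries.coeff_C_mul]
    have h3 : (PowerSeries.coeff (R := ℚ) 0) ((if m = 0 then PowerSeries.C (R := ℚ) 2 else (0:PowerSeries ℚ)))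
        = if m = 0 then 2 else 0 := by
      split <;> simp
    rw [h3]
    simp only [F, PowerSeries.coeff_mk, Wm_zero]
    split <;> simp
  | succ n =>
    simp only [map_add, PowerSeries.coeff_succ_X_mul, PowerSeries.coeff_C_mul]
    have h3 : (PowerSeries.coeff (R := ℚ) (n+1)) ((if m = 0 then PowerSeries.C (R := ℚ) 2 else (0:PowerSeries ℚ))) = 0 := by
      split <;> simp [PowerSeries.coeff_C]
    rw [h3, zero_add]
    simp only [F, PowerSeries.coeff_mk]
    rw [Wm_succ h n m hm0 hmh]
    push_cast
    field_simp
    ring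
open Polynomial in
noncomputable def G : ℕ → ℚ[X]
  | 0 => 1
  | 1 => 2
  | (k+2) => 2 * G (k+1) - (X:ℚ[X])^2 * G k

open Polynomial in
lemma U_deg : ∀ k : ℕ, (Chebyshev.U ℚ (k : ℤ)).natDegree = k ∧
    (Chebyshev.U ℚ (k : ℤ)).coeff k = 2 ^ k := by
  intro k
  induction k using Nat.strong_induction_on with
  | _ k ih =>
    match k with
    | 0 => simp [Chebyshev.U_zero]
    | 1 => constructor <;> simp [Chebyshev.U_one]
    | (k+2) =>
      obtain ⟨hd1, hc1⟩ := ih (k+1) (by omega)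
      obtain ⟨hd0, hc0⟩ := ih k (by omega)
      have hU : Chebyshev.U ℚ ((k:ℤ)+2) = 2 * X * Chebyshev.U ℚ ((k:ℤ)+1) - Chebyshev.U ℚ (k:ℤ) :=
        Chebyshev.U_add_two ℚ k
      have hne1 : Chebyshev.U ℚ ((k:ℤ)+1) ≠ 0 := by
        intro h0
        rw [show ((k:ℤ)+1) = ((k+1:ℕ):ℤ) by push_cast; ring] at h0
        rw [h0] at hc1
        simp at hc1
        exact absurd hc1.symm (by positivity)
      have hdmul : (2 * X * Chebyshev.U ℚ ((k:ℤ)+1)).natDegree = k + 2 := by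
        have hC : ((2:ℚ[X])) = C (2:ℚ) := (map_ofNat C 2).symm
        rw [show (2 * X * Chebyshev.U ℚ ((k:ℤ)+1)) = C 2 * (X * Chebyshev.U ℚ ((k:ℤ)+1)) by
          rw [← hC]; ring]
        rw [natDegree_C_mul (by norm_num), natDegree_X_mul hne1]
        rw [show ((k:ℤ)+1) = ((k+1:ℕ):ℤ) by push_cast; ring, hd1]
      have hC : ((2:ℚ[X])) = C (2:ℚ) := (map_ofNat C 2).symm
      have hcoeff : (Chebyshev.U ℚ ((k:ℤ)+2)).coeff (k+2) = 2 ^ (k+2) := by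
        rw [hU, coeff_sub]
        have e1 : (2 * X * Chebyshev.U ℚ ((k:ℤ)+1)).coeff (k+2)
            = 2 * (Chebyshev.U ℚ ((k:ℤ)+1)).coeff (k+1) := by
          rw [show (2 * X * Chebyshev.U ℚ ((k:ℤ)+1)) = C 2 * (X * Chebyshev.U ℚ ((k:ℤ)+1)) by
            rw [← hC]; ring]
          rw [coeff_C_mul, show (k+2) = (k+1)+1 from rfl, coeff_X_mul]
        have e2 : (Chebyshev.U ℚ (k:ℤ)).coeff (k+2) = 0 :=
          coeff_eq_zero_of_natDegree_lt (by rw [hd0]; omega)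
        rw [e1, e2, show ((k:ℤ)+1) = ((k+1:ℕ):ℤ) by push_cast; ring, hc1]
        ring
      have hdeg : (Chebyshev.U ℚ ((k:ℤ)+2)).natDegree = k + 2 := by
        rw [hU]
        rw [natDegree_sub_eq_left_of_natDegree_lt (by rw [hdmul, hd0]; omega), hdmul]
      constructor
      · rw [show (((k+2:ℕ)):ℤ) = ((k:ℤ)+2) by push_cast; ring]
        exact hdeg
      · rw [show (((k+2:ℕ)):ℤ) = ((k:ℤ)+2) by push_cast; ring]
        exact hcoeff
open Polynomial in
lemma reverse_def (f : ℚ[X]) : f.reverse = reflect f.natDegree f := rfl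

open Polynomial in
lemma reverse_U : ∀ k : ℕ, (Chebyshev.U ℚ (k : ℤ)).reverse = G k := by
  intro k
  induction k using Nat.strong_induction_on with
  | _ k ih =>
    match k with
    | 0 =>
      rw [show ((0:ℕ):ℤ) = 0 from rfl, Chebyshev.U_zero, reverse_def, natDegree_one, reflect_one]
      simp [G]
    | 1 =>
      have hC : ((2:ℚ[X])) = C (2:ℚ) := (map_ofNat C 2).symm
      rw [show ((1:ℕ):ℤ) = 1 from rfl, Chebyshev.U_one, reverse_def, hC]
      have hdeg : ((C (2:ℚ) * X : ℚ[X])).natDegree = 1 := by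
        rw [natDegree_C_mul (two_ne_zero), natDegree_X]
      rw [hdeg, reflect_C_mul, reflect_one_X]
      show _ = (2 : ℚ[X])
      rw [← hC]; ring
    | (k+2) =>
      have hC : ((2:ℚ[X])) = C (2:ℚ) := (map_ofNat C 2).symm
      have hU : Chebyshev.U ℚ ((k:ℤ)+2) = 2 * X * Chebyshev.U ℚ ((k:ℤ)+1) - Chebyshev.U ℚ (k:ℤ) :=
        Chebyshev.U_add_two ℚ k
      have hd1 := (U_deg (k+1)).1
      have hd0 := (U_deg k).1
      have hd2 := (U_deg (k+2)).1
      have hcast1 : ((k+1:ℕ):ℤ) = (k:ℤ)+1 := by push_cast; ring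
      have hcast2 : ((k+2:ℕ):ℤ) = (k:ℤ)+2 := by push_cast; ring
      rw [reverse_def, hd2, hcast2, hU]
      rw [sub_eq_add_neg, reflect_add, reflect_neg]
      have e1 : reflect (k+2) (2 * X * Chebyshev.U ℚ ((k:ℤ)+1)) = 2 * G (k+1) := by
        rw [show (2 * X * Chebyshev.U ℚ ((k:ℤ)+1)) = C 2 * (X * Chebyshev.U ℚ ((k:ℤ)+1)) by
          rw [← hC]; ring]
        rw [reflect_C_mul]
        have : reflect (1 + (k+1)) ((X:ℚ[X]) * Chebyshev.U ℚ ((k:ℤ)+1))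
            = reflect 1 (X:ℚ[X]) * reflect (k+1) (Chebyshev.U ℚ ((k:ℤ)+1)) :=
          reflect_mul _ _ (by rw [natDegree_X]) (by rw [← hcast1] at *; rw [hd1])
        rw [show k+2 = 1+(k+1) by omega, this, reflect_one_X, one_mul]
        have hrev1 : reflect (k+1) (Chebyshev.U ℚ ((k:ℤ)+1)) = G (k+1) := by
          rw [← hcast1, ← ih (k+1) (by omega), reverse_def, hd1]
        rw [hrev1, ← hC]
      have e2 : reflect (k+2) (Chebyshev.U ℚ (k:ℤ)) = (X:ℚ[X])^2 * G k := by
        have : reflect (2 + k) ((1:ℚ[X]) * Chebyshev.U ℚ (k:ℤ))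
            = reflect 2 (1:ℚ[X]) * reflect k (Chebyshev.U ℚ (k:ℤ)) :=
          reflect_mul _ _ (by simp) (by rw [hd0])
        rw [show k+2 = 2+k by omega, show (Chebyshev.U ℚ (k:ℤ)) = 1 * Chebyshev.U ℚ (k:ℤ) by ring,
          this, reflect_one]
        congr 1
        rw [← ih k (by omega), reverse_def, hd0]
      rw [e1, e2]
      show _ = G (k+2)
      rw [G]
      ring
open Polynomial in
noncomputable def DG (h : ℕ) : PowerSeries ℚ := ((G (h+1) : ℚ[X]) : PowerSeries ℚ)

open Polynomial in
noncomputable def B (h : ℕ) (m : ℤ) : PowerSeries ℚ :=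
  if 0 ≤ m ∧ m ≤ (h : ℤ) then
    ((2 * X ^ m.toNat * G (h - m.toNat) : ℚ[X]) : PowerSeries ℚ)
  else 0

open Polynomial in
lemma B_nat (h j : ℕ) (hj : j ≤ h) :
    B h (j : ℤ) = ((2 * X ^ j * G (h - j) : ℚ[X]) : PowerSeries ℚ) := by
  rw [B, if_pos ⟨Int.natCast_nonneg j, by exact_mod_cast hj⟩, Int.toNat_natCast]

open Polynomial in
lemma B_zero' {h : ℕ} {m : ℤ} (hm : m < 0 ∨ (h:ℤ) < m) : B h m = 0 := by
  rw [B, if_neg]; omega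

open Polynomial in
lemma coe2 : (((2:ℚ[X])) : PowerSeries ℚ) = (2 : PowerSeries ℚ) := by
  rw [(map_ofNat (C : ℚ →+* ℚ[X]) 2).symm, Polynomial.coe_C]
  exact map_ofNat (PowerSeries.C (R := ℚ)) 2

open Polynomial in
lemma B_rec (h : ℕ) (m : ℤ) (hm0 : 0 ≤ m) (hmh : m ≤ (h : ℤ)) :
    2 * B h m = (if m = 0 then 2 * DG h else 0)
      + PowerSeries.X * (B h (m - 1) + B h (m + 1)) := by
  lift m to ℕ using hm0 with j
  have hjh : j ≤ h := by exact_mod_cast hmh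
  cases j with
  | zero =>
    have hB0 := B_nat h 0 (Nat.zero_le h)
    rw [Nat.cast_zero] at hB0
    rw [Nat.cast_zero, hB0, B_zero' (h := h) (m := (0:ℤ) - 1) (by omega), if_pos rfl, DG]
    cases h with
    | zero =>
      rw [B_zero' (h := 0) (m := (0:ℤ) + 1) (by omega)]
      simp only [← coe2, ← Polynomial.coe_X, ← Polynomial.coe_zero,
        ← Polynomial.coe_mul, ← Polynomial.coe_add]
      rw [Polynomial.coe_inj]
      show 2 * (2 * X ^ 0 * G 0) = 2 * G 1 + X * (0 + 0)
      rw [show G 0 = 1 from rfl, show G 1 = 2 from rfl]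
      ring
    | succ h' =>
      have hB1 := B_nat (h'+1) 1 (by omega)
      rw [Nat.cast_one] at hB1
      rw [show ((0:ℤ) + 1) = 1 from rfl, hB1]
      simp only [← coe2, ← Polynomial.coe_X, ← Polynomial.coe_zero,
        ← Polynomial.coe_mul, ← Polynomial.coe_add]
      rw [Polynomial.coe_inj]
      show 2 * (2 * X ^ 0 * G (h'+1-0)) = 2 * G (h'+1+1) + X * (0 + 2 * X ^ 1 * G (h'+1-1))
      rw [show h'+1-0 = h'+1 from rfl, show h'+1+1 = h'+2 from rfl,
        show h'+1-1 = h' from rfl, G]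
      ring
  | succ j' =>
    have hj1 : j' + 1 ≤ h := hjh
    rw [if_neg (by exact_mod_cast Nat.succ_ne_zero j')]
    rw [show (((j'+1:ℕ):ℤ) - 1) = ((j':ℕ):ℤ) by push_cast; ring]
    rw [B_nat h (j'+1) hj1, B_nat h j' (by omega)]
    rcases Nat.lt_or_ge (j'+1) h with hlt | hge
    · rw [show (((j'+1:ℕ):ℤ) + 1) = ((j'+2:ℕ):ℤ) by push_cast; ring]
      rw [B_nat h (j'+2) (by omega)]
      obtain ⟨d, rfl⟩ : ∃ d, h = j' + 2 + d := ⟨h - (j'+2), by omega⟩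
      simp only [← coe2, ← Polynomial.coe_X, ← Polynomial.coe_zero,
        ← Polynomial.coe_mul, ← Polynomial.coe_add]
      rw [Polynomial.coe_inj]
      rw [show j'+2+d-(j'+1) = d+1 by omega, show j'+2+d-j' = d+2 by omega,
        show j'+2+d-(j'+2) = d by omega, G]
      ring
    · have hE : h = j' + 1 := by omega
      subst hE
      rw [B_zero' (h := j'+1) (m := ((j'+1:ℕ):ℤ) + 1) (by push_cast; omega)]
      simp only [← coe2, ← Polynomial.coe_X, ← Polynomial.coe_zero,
        ← Polynomial.coe_mul, ← Polynomial.coe_add]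
      rw [Polynomial.coe_inj]
      rw [show j'+1-(j'+1) = 0 by omega, show j'+1-j' = 1 by omega,
        show G 0 = 1 from rfl, show G 1 = 2 from rfl]
      ring
open Polynomial in
lemma coeff_key (h : ℕ) : ∀ N : ℕ, ∀ m : ℤ,
    PowerSeries.coeff (R := ℚ) N (F h m * DG h) = PowerSeries.coeff (R := ℚ) N (B h m) := by
  intro N
  induction N using Nat.strong_induction_on with
  | _ N ih =>
    intro m
    by_cases hm : 0 ≤ m ∧ m ≤ (h:ℤ)
    · have hC2 : (PowerSeries.C (R := ℚ) 2) = (2:PowerSeries ℚ) := map_ofNat _ 2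
      have hA : 2 * (F h m * DG h) = (if m = 0 then 2 * DG h else 0)
          + PowerSeries.X * ((F h (m-1) * DG h) + (F h (m+1) * DG h)) := by
        have h0 := congrArg (· * DG h) (F_rec h m hm.1 hm.2)
        rw [hC2] at h0
        rw [show 2 * (F h m * DG h) = 2 * F h m * DG h by ring, h0]
        split <;> ring
      have hB := B_rec h m hm.1 hm.2
      have h2 : PowerSeries.coeff (R := ℚ) N (2 * (F h m * DG h))
          = PowerSeries.coeff (R := ℚ) N (2 * B h m) := by
        rw [hA, hB]
        simp only [map_add]
        congr 1
        cases N with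
        | zero => simp
        | succ n =>
          rw [PowerSeries.coeff_succ_X_mul, PowerSeries.coeff_succ_X_mul]
          simp only [map_add]
          rw [ih n (by omega) (m-1), ih n (by omega) (m+1)]
      rw [← hC2, PowerSeries.coeff_C_mul, PowerSeries.coeff_C_mul] at h2
      linarith [h2]
    · have hm' : m < 0 ∨ (h:ℤ) < m := by omega
      rw [F_eq_zero hm', B_zero' hm', zero_mul]

end OgfAux


open OgfAux Polynomial in
/-- The generating function of the probabilities `q_n^{(h)} = W(n,h)/2^n` multiplied by the
reversed Chebyshev polynomial of the second kind of degree `h+1` equals `2 z^h` in `ℚ⟦z⟧`. -/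
theorem ogf_q_mul_rev_chebyshevU (h : ℕ) :
    (PowerSeries.mk fun n => (W n h : ℚ) / 2 ^ n) *
      ((Polynomial.Chebyshev.U ℚ ((h : ℤ) + 1)).reverse : PowerSeries ℚ) =
      2 * PowerSeries.X ^ h := by
  have hkey : F h (h:ℤ) * DG h = B h (h:ℤ) :=
    PowerSeries.ext fun N => coeff_key h N _
  have hBh : B h ((h:ℕ):ℤ) = ((2 * X ^ h * G (h-h) : ℚ[X]) : PowerSeries ℚ) :=
    B_nat h h le_rfl
  have hrev : ((Chebyshev.U ℚ ((h:ℤ)+1)).reverse : PowerSeries ℚ) = DG h := by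
    rw [show ((h:ℤ)+1) = (((h+1:ℕ)):ℤ) by push_cast; ring, reverse_U (h+1), DG]
  have hF : (PowerSeries.mk fun n => (W n h : ℚ) / 2 ^ n) = F h (h:ℤ) := rfl
  rw [hF, hrev, hkey, hBh, Nat.sub_self, show G 0 = 1 from rfl]
  simp only [Polynomial.coe_mul, Polynomial.coe_pow, Polynomial.coe_X, Polynomial.coe_one, coe2]
  ring
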